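/- Let c ∈ (0,1) with c ≠ 1/2, and let (X_n)_{n≥1} be i.i.d. Bernoulli(c). For t ≥ 1 let ĉ_t := (1/t)·∑_{i=1}^t X_i, and for each α ∈ (0,1) define the Chernoff stopping time τ_α := inf{ t ≥ 2 : t · d(ĉ_t, 1/2) > log(2t/α) } (with the convention d(0,1/2) = d(1,1/2) = log 2). Then almost surely, limsup_{α ↓ 0} τ_α / log(1/α) ≤ 1 / d(c, 1/2). -/

import Mathlib

open MeasureTheory ProbabilityTheory Filter
open scoped ENNReal Topology

/-- KL divergence between Bernoulli(p) and Bernoulli(q) (natural logarithm).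
Note that with Lean's conventions `klBer 0 (1/2) = klBer 1 (1/2) = Real.log 2`,
matching the paper's convention `d(0,1/2) = d(1,1/2) = log 2`. -/
noncomputable def klBer (p q : ℝ) : ℝ :=
  p * Real.log (p / q) + (1 - p) * Real.log ((1 - p) / (1 - q))

/-- Bernoulli(p) distribution on `ℝ` (mass `p` at `1` and `1-p` at `0`). -/
noncomputable def bern (p : ℝ) : MeasureTheory.Measure ℝ :=
  (ENNReal.ofReal p) • MeasureTheory.Measure.dirac 1 +
    (ENNReal.ofReal (1 - p)) • MeasureTheory.Measure.dirac 0

/-- Empirical mean `ĉ_t = (1/t) ∑_{i=1}^t X_i`. -/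
noncomputable def empMean {Ω : Type*} (X : ℕ → Ω → ℝ) (t : ℕ) (ω : Ω) : ℝ :=
  (1 / (t : ℝ)) * ∑ i ∈ Finset.Icc 1 t, X i ω

/-- Chernoff stopping time `τ_α = inf{ t ≥ 2 : t d(ĉ_t, 1/2) > log (2t/α) }`
(`⊤` if no such `t` exists). -/
noncomputable def chernoffTau {Ω : Type*} (X : ℕ → Ω → ℝ) (α : ℝ) (ω : Ω) : ℕ∞ :=
  sInf {t : ℕ∞ | ∃ n : ℕ, t = (n : ℕ∞) ∧ 2 ≤ n ∧
    Real.log (2 * n / α) < (n : ℝ) * klBer (empMean X n ω) (1/2)}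

/-- strict positivity of the Bernoulli KL divergence -/
lemma klBer_pos {p q : ℝ} (hp : p ∈ Set.Ioo (0:ℝ) 1) (hq : q ∈ Set.Ioo (0:ℝ) 1)
    (hne : p ≠ q) : 0 < klBer p q := by
  obtain ⟨hp0, hp1⟩ := hp
  obtain ⟨hq0, hq1⟩ := hq
  have hp0' : p ≠ 0 := ne_of_gt hp0
  have h1p : (1:ℝ) - p ≠ 0 := by intro h; simp only [sub_eq_zero] at h; exact absurd h.symm (ne_of_lt hp1)
  have hne1 : q / p ≠ 1 := by
    intro h
    rw [div_eq_one_iff_eq hp0'] at h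
    exact hne h.symm
  have h1 : Real.log (q / p) < q / p - 1 :=
    Real.log_lt_sub_one_of_pos (by positivity) hne1
  have h2 : Real.log ((1 - q) / (1 - p)) ≤ (1 - q) / (1 - p) - 1 :=
    Real.log_le_sub_one_of_pos (by
      apply div_pos <;> linarith)
  have e1 : Real.log (p / q) = - Real.log (q / p) := by
    rw [Real.log_div (by linarith) (by linarith), Real.log_div (by linarith) (by linarith)]
    ring
  have e2 : Real.log ((1 - p) / (1 - q)) = - Real.log ((1 - q) / (1 - p)) := by
    rw [Real.log_div (by linarith) (by linarith), Real.log_div (by linarith) (by linarith)]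
    ring
  have key1 : p * Real.log (q / p) < q - p := by
    have := mul_lt_mul_of_pos_left h1 hp0
    have hpd : p * (q / p - 1) = q - p := by field_simp
    linarith [hpd ▸ this]
  have key2 : (1 - p) * Real.log ((1 - q) / (1 - p)) ≤ p - q := by
    have := mul_le_mul_of_nonneg_left h2 (by linarith : (0:ℝ) ≤ 1 - p)
    have hpd : (1 - p) * ((1 - q) / (1 - p) - 1) = p - q := by
      field_simp [h1p]
      ring
    linarith [hpd ▸ this]
  unfold klBer
  rw [e1, e2]
  nlinarith

/-- continuity of `x ↦ klBer x (1/2)` on the open interval -/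
lemma klBer_continuousAt {c : ℝ} (hc : c ∈ Set.Ioo (0:ℝ) 1) :
    ContinuousAt (fun x => klBer x (1/2)) c := by
  obtain ⟨hc0, hc1⟩ := hc
  unfold klBer
  have hcne : c / (1/2) ≠ 0 := by positivity
  have h1 : ContinuousAt (fun x : ℝ => Real.log (x / (1/2))) c :=
    (Real.continuousAt_log (by simpa using hcne)).comp ((continuousAt_id).div_const _)
  have h2 : ContinuousAt (fun x : ℝ => Real.log ((1 - x) / (1 - 1/2))) c := by
    have hcne2 : (1 - c) / (1 - 1/2) ≠ 0 := by
      refine ne_of_gt (div_pos ?_ ?_) <;> linarith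
    exact (Real.continuousAt_log (by simpa using hcne2)).comp
      (((continuousAt_const).sub continuousAt_id).div_const _)
  exact ((continuousAt_id.mul h1).add (((continuousAt_const).sub continuousAt_id).mul h2))

/-- log of an affine function is eventually below any linear function -/
lemma eventually_log_affine_lt {a b γ : ℝ} (ha : 0 < a) (hγ : 0 < γ) :
    ∀ᶠ L : ℝ in atTop, Real.log (a * L + b) < γ * L := by
  have hsum : 0 < a + |b| + 1 := by positivity
  have e0 : ∀ᶠ L : ℝ in atTop, 1 ≤ a * L + b := by
    have h : Tendsto (fun L : ℝ => a * L + b) atTop atTop :=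
      tendsto_atTop_add_const_right _ b (Tendsto.const_mul_atTop ha tendsto_id)
    exact h.eventually_ge_atTop 1
  have e1 : ∀ᶠ L : ℝ in atTop, 1 ≤ L := eventually_ge_atTop 1
  have e2 : ∀ᶠ L : ℝ in atTop, |Real.log L| ≤ γ/2 * |L| := by
    have := Real.isLittleO_log_id_atTop
    exact (Asymptotics.isLittleO_iff.mp this) (by positivity)
  have e3 : ∀ᶠ L : ℝ in atTop, Real.log (a + |b| + 1) + 1 ≤ γ/2 * L := by
    have h : Tendsto (fun L : ℝ => γ/2 * L) atTop atTop :=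
      Tendsto.const_mul_atTop (by positivity) tendsto_id
    exact h.eventually_ge_atTop _
  filter_upwards [e0, e1, e2, e3] with L h0 h1 h2 h3
  have hL0 : 0 < L := lt_of_lt_of_le one_pos h1
  have hb : a * L + b ≤ (a + |b| + 1) * L := by
    have hbb : b ≤ |b| := le_abs_self b
    nlinarith [abs_nonneg b]
  have hlog1 : Real.log (a * L + b) ≤ Real.log ((a + |b| + 1) * L) :=
    Real.log_le_log (by linarith) hb
  have hlog2 : Real.log ((a + |b| + 1) * L) = Real.log (a + |b| + 1) + Real.log L :=
    Real.log_mul (ne_of_gt hsum) (ne_of_gt hL0)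
  have hlogL : Real.log L ≤ γ/2 * L := by
    have : Real.log L ≤ |Real.log L| := le_abs_self _
    rw [abs_of_pos hL0] at h2
    linarith
  linarith

/-- Key deterministic lemma: if the empirical mean converges to `c`, then for every
`r > 1 / klBer c (1/2)` the normalized stopping time is eventually `≤ r`. -/
lemma key_eventually {Ω : Type*} (X : ℕ → Ω → ℝ) (c r : ℝ) (ω : Ω)
    (hc : c ∈ Set.Ioo (0:ℝ) 1) (hc' : c ≠ 1/2)
    (htend : Tendsto (fun t => empMean X t ω) atTop (𝓝 c))
    (hr : 1 / klBer c (1/2) < r) :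
    ∀ᶠ α in 𝓝[>] (0:ℝ),
      (chernoffTau X α ω : ℝ≥0∞) / ENNReal.ofReal (Real.log (1/α)) ≤ ENNReal.ofReal r := by
  have hd : 0 < klBer c (1/2) := klBer_pos hc (by norm_num) hc'
  set d := klBer c (1/2) with hdd
  have hr0 : 0 < r := lt_trans (by positivity) hr
  have h1rd : 1 < r * d := by
    have := (div_lt_iff₀ hd).mp hr
    linarith
  have h1r : 1 / r < d := (div_lt_iff₀ hr0).mpr (by linarith)
  set d' := (1/r + d)/2 with hd'def
  have hd'0 : 0 < d' := by
    have : 0 < 1/r := by positivity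
    rw [hd'def]; linarith
  have hd'lt : d' < d := by rw [hd'def]; linarith
  have h1d' : 1 / d' < r := by
    rw [div_lt_iff₀ hd'0, hd'def]
    have hrr : r * (1/r) = 1 := mul_one_div_cancel (ne_of_gt hr0)
    nlinarith
  set r'' := (1/d' + r)/2 with hr''def
  have hr''0 : 0 < r'' := by
    have : 0 < 1/d' := by positivity
    rw [hr''def]; linarith
  have hr''lt : r'' < r := by rw [hr''def]; linarith
  have hγ : 0 < r'' * d' - 1 := by
    have h : 1 / d' < r'' := by rw [hr''def]; linarith
    have := (div_lt_iff₀ hd'0).mp h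
    linarith
  set γ := r'' * d' - 1 with hγdef
  -- eventual lower bound on the KL of the empirical mean
  have hklb : ∀ᶠ t in atTop, d' < klBer (empMean X t ω) (1/2) :=
    ((klBer_continuousAt hc).tendsto.comp htend).eventually_const_lt hd'lt
  obtain ⟨T, hT⟩ := eventually_atTop.mp hklb
  -- facts along L → ∞
  have hlog := eventually_log_affine_lt (a := 2 * r'') (b := 2) (γ := γ) (by positivity) hγ
  have hALL : ∀ᶠ L : ℝ in atTop,
      0 < L ∧ (2:ℝ) ≤ r'' * L ∧ (T:ℝ) ≤ r'' * L ∧ r'' * L + 1 ≤ r * L ∧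
        Real.log (2 * r'' * L + 2) < γ * L := by
    have tmul : Tendsto (fun L : ℝ => r'' * L) atTop atTop :=
      Tendsto.const_mul_atTop hr''0 tendsto_id
    have e4 : ∀ᶠ L : ℝ in atTop, r'' * L + 1 ≤ r * L := by
      have h : Tendsto (fun L : ℝ => (r - r'') * L) atTop atTop :=
        Tendsto.const_mul_atTop (by linarith) tendsto_id
      filter_upwards [h.eventually_ge_atTop 1] with L hL
      nlinarith
    filter_upwards [eventually_gt_atTop 0, tmul.eventually_ge_atTop 2,
      tmul.eventually_ge_atTop (T:ℝ), e4, hlog] with L h1 h2 h3 h4 h5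
    exact ⟨h1, h2, h3, h4, h5⟩
  -- pull back along α ↦ log (1/α)
  have htendL : Tendsto (fun α : ℝ => Real.log (1/α)) (𝓝[>] 0) atTop := by
    have h1 : Tendsto (fun α : ℝ => -Real.log α) (𝓝[>] (0:ℝ)) atTop :=
      tendsto_neg_atBot_atTop.comp Real.tendsto_log_nhdsGT_zero
    refine h1.congr fun α => ?_
    rw [one_div, Real.log_inv]
  filter_upwards [htendL.eventually hALL, self_mem_nhdsWithin] with α hA hα
  obtain ⟨hL0, h2L, hTL, hrL, hlogL⟩ := hA
  have hα0 : (0:ℝ) < α := hα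
  set L := Real.log (1/α) with hLdef
  set n := ⌈r'' * L⌉₊ with hndef
  have hnlb : r'' * L ≤ (n:ℝ) := Nat.le_ceil _
  have hnub : (n:ℝ) ≤ r'' * L + 1 := le_of_lt (Nat.ceil_lt_add_one (by positivity))
  have hn2 : 2 ≤ n := by exact_mod_cast le_trans h2L hnlb
  have hnT : T ≤ n := by exact_mod_cast le_trans hTL hnlb
  have hn0 : (0:ℝ) < n := by
    have : (2:ℝ) ≤ n := by exact_mod_cast hn2
    linarith
  have hkl : d' < klBer (empMean X n ω) (1/2) := hT n hnT
  have hlogn : Real.log (2 * n) < γ * L := by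
    refine lt_of_le_of_lt (Real.log_le_log (by positivity) ?_) hlogL
    nlinarith
  have hmain : Real.log (2 * n / α) < (n:ℝ) * klBer (empMean X n ω) (1/2) := by
    have hsplit : Real.log (2 * (n:ℝ) / α) = Real.log (2 * (n:ℝ)) + L := by
      rw [hLdef, Real.log_div (by positivity) (ne_of_gt hα0),
        Real.log_div one_ne_zero (ne_of_gt hα0), Real.log_one]
      ring
    rw [hsplit]
    have h3 : r'' * d' * L ≤ (n:ℝ) * d' := by nlinarith
    have h4 : (n:ℝ) * d' ≤ (n:ℝ) * klBer (empMean X n ω) (1/2) :=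
      mul_le_mul_of_nonneg_left hkl.le hn0.le
    have : γ * L + L = r'' * d' * L := by rw [hγdef]; ring
    linarith
  have hmem : ((n:ℕ∞)) ∈ {t : ℕ∞ | ∃ m : ℕ, t = (m : ℕ∞) ∧ 2 ≤ m ∧
      Real.log (2 * m / α) < (m : ℝ) * klBer (empMean X m ω) (1/2)} :=
    ⟨n, rfl, hn2, hmain⟩
  have hτ : chernoffTau X α ω ≤ (n:ℕ∞) := sInf_le hmem
  have hcast : ((chernoffTau X α ω : ℕ∞) : ℝ≥0∞) ≤ ((n:ℕ) : ℝ≥0∞) := by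
    have := ENat.toENNReal_le.mpr hτ
    simpa using this
  calc (chernoffTau X α ω : ℝ≥0∞) / ENNReal.ofReal L
      ≤ ((n:ℕ) : ℝ≥0∞) / ENNReal.ofReal L := by
        exact ENNReal.div_le_div_right hcast _
    _ ≤ ENNReal.ofReal r := by
        rw [← ENNReal.ofReal_natCast]
        refine ENNReal.div_le_of_le_mul ?_
        rw [← ENNReal.ofReal_mul hr0.le]
        exact ENNReal.ofReal_le_ofReal (by nlinarith)

/-- Asymptotic optimality of the Chernoff stopping rule (second part of Lemma 2):
almost surely, `limsup_{α ↓ 0} τ_α / log(1/α) ≤ 1 / d(c, 1/2)`. -/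
theorem stmt_3 {Ω : Type*} [MeasurableSpace Ω] (P : Measure Ω) [IsProbabilityMeasure P]
    (c : ℝ) (hc : c ∈ Set.Ioo (0 : ℝ) 1) (hc' : c ≠ 1/2)
    (X : ℕ → Ω → ℝ) (hmeas : ∀ n, Measurable (X n))
    (hindep : iIndepFun X P)
    (hdist : ∀ n, Measure.map (X n) P = bern c) :
    ∀ᵐ ω ∂P,
      Filter.limsup
        (fun α : ℝ => (chernoffTau X α ω : ℝ≥0∞) / ENNReal.ofReal (Real.log (1 / α)))
        (𝓝[>] (0 : ℝ)) ≤ ENNReal.ofReal (1 / klBer c (1/2)) := by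
  have hd : 0 < klBer c (1/2) := klBer_pos hc (by norm_num) hc'
  -- integrability of the identity w.r.t. bern c
  have hdirac : ∀ a : ℝ, Integrable (fun x : ℝ => x) (Measure.dirac a) := by
    intro a
    refine ⟨aestronglyMeasurable_id, ?_⟩
    simp [HasFiniteIntegral, lintegral_dirac]
  have hid : Integrable (fun x : ℝ => x) (bern c) := by
    unfold bern
    exact Integrable.add_measure
      ((hdirac 1).smul_measure ENNReal.ofReal_ne_top)
      ((hdirac 0).smul_measure ENNReal.ofReal_ne_top)
  -- the shifted sequence
  set Y : ℕ → Ω → ℝ := fun i => X (1 + i) with hYdef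
  have hYint : Integrable (Y 0) P := by
    have hmap : AEStronglyMeasurable (fun x : ℝ => x) (Measure.map (X 1) P) := by
      rw [hdist]; exact aestronglyMeasurable_id
    have h := (integrable_map_measure hmap (hmeas 1).aemeasurable).mp
      (by rw [hdist 1]; exact hid)
    exact h
  have hYindep : Pairwise (Function.onFun (IndepFun · · P) Y) := by
    intro i j hij
    exact hindep.indepFun (by omega)
  have hYident : ∀ i, IdentDistrib (Y i) (Y 0) P P := fun i =>
    ⟨(hmeas _).aemeasurable, (hmeas _).aemeasurable, by rw [hdist, hdist]⟩
  have hEY : P[Y 0] = c := by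
    have h1 : ∫ ω, Y 0 ω ∂P = ∫ x, x ∂(Measure.map (X 1) P) := by
      have hmap : AEStronglyMeasurable (fun x : ℝ => x) (Measure.map (X 1) P) := by
        rw [hdist]; exact aestronglyMeasurable_id
      exact (integral_map (hmeas 1).aemeasurable hmap).symm
    rw [h1, hdist 1]
    unfold bern
    rw [integral_add_measure ((hdirac 1).smul_measure ENNReal.ofReal_ne_top)
      ((hdirac 0).smul_measure ENNReal.ofReal_ne_top),
      integral_smul_measure, integral_smul_measure, integral_dirac, integral_dirac]
    simp [ENNReal.toReal_ofReal hc.1.le]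
  have hSLLN := strong_law_ae_real Y hYint hYindep hYident
  rw [hEY] at hSLLN
  filter_upwards [hSLLN] with ω hω
  have htend : Tendsto (fun t => empMean X t ω) atTop (𝓝 c) := by
    refine hω.congr fun t => ?_
    unfold empMean
    rw [← Finset.Ico_add_one_right_eq_Icc, Finset.sum_Ico_eq_sum_range]
    simp only [hYdef, Nat.succ_sub_one, Nat.add_sub_cancel]
    rw [one_div, inv_mul_eq_div]
  refine ENNReal.le_of_forall_pos_le_add fun ε hε _ => ?_
  have hev := key_eventually X c (1 / klBer c (1/2) + (ε:ℝ)) ω hc hc' htend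
    (lt_add_of_pos_right _ (by exact_mod_cast hε))
  have heq : ENNReal.ofReal (1 / klBer c (1/2) + (ε:ℝ)) =
      ENNReal.ofReal (1 / klBer c (1/2)) + (ε : ℝ≥0∞) := by
    rw [ENNReal.ofReal_add (by positivity) ε.coe_nonneg, ENNReal.ofReal_coe_nnreal]
  calc Filter.limsup _ (𝓝[>] (0:ℝ)) ≤ ENNReal.ofReal (1 / klBer c (1/2) + (ε:ℝ)) :=
        limsup_le_of_le (h := hev)
    _ = _ := heq
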